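/- (Kakeya, part (a), eventual form) Let (x_n)_{n=1}^∞ be a sequence of strictly positive real numbers such that ∑_n x_n converges and such that ∑_{k=n+1}^∞ x_k ≥ x_n holds for every sufficiently large n ∈ ℕ. Then the achievement set { ∑_{n=1}^∞ ε_n x_n : ε_n ∈ {0,1} for every n } is a finite union of nondegenerate bounded closed intervals of ℝ. -/

import Mathlib

open Filter

/-- Greedy remainder sequence. -/
noncomputable def rSeq (x : ℕ → ℝ) (t : ℝ) : ℕ → ℝ
  | 0 => t
  | (n+1) => if x n ≤ rSeq x t n then rSeq x t n - x n else rSeq x t n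

/-- Tail identity. -/
lemma tail_eq (x : ℕ → ℝ) (hsum : Summable x) (n : ℕ) :
    ∑' k, x (n + k) = x n + ∑' k, x (n + 1 + k) := by
  have hs : Summable fun k => x (n + k) :=
    ((summable_nat_add_iff n).mpr hsum).congr (fun k => by rw [add_comm])
  rw [hs.tsum_eq_zero_add]
  simp only [add_zero]
  congr 1
  exact tsum_congr fun k => by congr 1; omega

/-- Classical Kakeya: if every term is at most the sum of subsequent terms, every
`t ∈ [0, total]` is achieved. -/
lemma kakeya_full (x : ℕ → ℝ) (hpos : ∀ n, 0 < x n) (hsum : Summable x)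
    (hcond : ∀ n, x n ≤ ∑' k : ℕ, x (n + 1 + k))
    (t : ℝ) (ht0 : 0 ≤ t) (ht1 : t ≤ ∑' n, x n) :
    ∃ T : Set ℕ, HasSum (Set.indicator T x) t := by
  set r := rSeq x t with hr
  set T : Set ℕ := {n | x n ≤ r n} with hT
  have hr0 : r 0 = t := rfl
  have hrs : ∀ n, r (n+1) = if x n ≤ r n then r n - x n else r n := fun n => rfl
  have hnn : ∀ n, 0 ≤ r n := by
    intro n
    induction n with
    | zero => simpa [hr0]
    | succ n ih =>
      rw [hrs]
      split
      · linarith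
      · exact ih
  have htail : ∀ n, r n ≤ ∑' k, x (n + k) := by
    intro n
    induction n with
    | zero =>
      rw [hr0]
      calc t ≤ ∑' n, x n := ht1
        _ = ∑' k, x (0 + k) := tsum_congr fun k => by rw [zero_add]
    | succ n ih =>
      rw [hrs]
      have hid : ∑' k, x (n + k) = x n + ∑' k, x (n + 1 + k) := tail_eq x hsum n
      have hco : ∑' k, x (n + 1 + k) = ∑' k, x ((n+1) + k) := rfl
      split_ifs with h
      · rw [← hco]; linarith
      · rw [← hco]
        have := hcond n
        linarith
  have hps : ∀ n, ∑ k ∈ Finset.range n, Set.indicator T x k = t - r n := by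
    intro n
    induction n with
    | zero => simp [hr0]
    | succ n ih =>
      rw [Finset.sum_range_succ, ih, hrs]
      by_cases h : x n ≤ r n
      · have hm : n ∈ T := h
        rw [Set.indicator_of_mem hm, if_pos h]; ring
      · have hm : n ∉ T := h
        rw [Set.indicator_of_notMem hm, if_neg h]; ring
  -- tail tends to zero
  have htend0 : Tendsto (fun n => ∑' k, x (n + k)) atTop (nhds 0) := by
    have := tendsto_sum_nat_add x
    refine this.congr fun n => tsum_congr fun k => by rw [add_comm]
  have hrtend : Tendsto r atTop (nhds 0) :=
    squeeze_zero hnn htail htend0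
  have hind : Summable (Set.indicator T x) := hsum.indicator T
  have h1 : Tendsto (fun n => ∑ k ∈ Finset.range n, Set.indicator T x k) atTop (nhds t) := by
    simp only [hps]
    have := (tendsto_const_nhds (x := t) (f := atTop)).sub hrtend
    simpa using this
  have h2 := hind.hasSum.tendsto_sum_nat
  have := tendsto_nhds_unique h2 h1
  exact ⟨T, this ▸ hind.hasSum⟩

/-- Kakeya, part (a), eventual form: if `x n` is positive, `∑ x n` converges, and eventually
each term is at most the sum of all subsequent terms, then the achievement set is a finite
union of nondegenerate bounded closed intervals. -/
theorem stmt4 (x : ℕ → ℝ) (hpos : ∀ n, 0 < x n) (hsum : Summable x)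
    (hcond : ∀ᶠ n in atTop, x n ≤ ∑' k : ℕ, x (n + 1 + k)) :
    ∃ s : Finset (ℝ × ℝ), (∀ p ∈ s, p.1 < p.2) ∧
      {y : ℝ | ∃ T : Set ℕ, HasSum (Set.indicator T x) y} = ⋃ p ∈ s, Set.Icc p.1 p.2 := by
  classical
  obtain ⟨N, hN⟩ := eventually_atTop.mp hcond
  set x' : ℕ → ℝ := fun k => x (N + k) with hx'
  have hsum' : Summable x' :=
    ((summable_nat_add_iff N).mpr hsum).congr (fun k => by simp [hx', add_comm])
  set σ : ℝ := ∑' k, x' k with hσ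
  have hσpos : 0 < σ := by
    have := Summable.tsum_pos hsum' (fun k => (hpos _).le) 0 (hpos (N + 0))
    simpa [hσ] using this
  set s : Finset (ℝ × ℝ) :=
    (Finset.range N).powerset.image (fun F => (∑ n ∈ F, x n, ∑ n ∈ F, x n + σ)) with hs
  refine ⟨s, ?_, ?_⟩
  · intro p hp
    simp only [hs, Finset.mem_image] at hp
    obtain ⟨F, _, rfl⟩ := hp
    simpa using hσpos
  · ext y
    simp only [Set.mem_setOf_eq, Set.mem_iUnion]
    constructor
    · rintro ⟨T, hT⟩
      set F : Finset ℕ := (Finset.range N).filter (· ∈ T) with hF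
      set a : ℝ := ∑ n ∈ F, x n with ha
      refine ⟨(a, a + σ), ?_, ?_⟩
      · simp only [hs, Finset.mem_image]
        exact ⟨F, Finset.mem_powerset.mpr (Finset.filter_subset _ _), rfl⟩
      · -- show y ∈ [a, a + σ]
        have hindsum : Summable (Set.indicator T x) := hsum.indicator T
        have hysplit :
            ∑ i ∈ Finset.range N, Set.indicator T x i + ∑' i, Set.indicator T x (i + N) = y := by
          rw [hindsum.sum_add_tsum_nat_add N]
          exact hT.tsum_eq
        have hhead : ∑ i ∈ Finset.range N, Set.indicator T x i = a := by
          rw [ha, hF, Finset.sum_filter]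
          refine Finset.sum_congr rfl fun i _ => ?_
          by_cases h : i ∈ T <;> simp [Set.indicator, h]
        set z : ℝ := ∑' i, Set.indicator T x (i + N) with hz
        have hzsum : Summable fun i => Set.indicator T x (i + N) :=
          (summable_nat_add_iff N).mpr hindsum
        have hz0 : 0 ≤ z :=
          tsum_nonneg fun i => Set.indicator_nonneg (fun n _ => (hpos n).le) _
        have hxsum' : Summable fun i => x (i + N) := (summable_nat_add_iff N).mpr hsum
        have hzσ : z ≤ σ := by
          have h1 : z ≤ ∑' i, x (i + N) := by
            refine Summable.tsum_le_tsum (fun i => ?_) hzsum hxsum'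
            exact Set.indicator_le_self' (fun n _ => (hpos n).le) _
          have h2 : ∑' i, x (i + N) = σ := tsum_congr fun i => by simp [hx', add_comm]
          linarith
        refine ⟨?_, ?_⟩
        · show a ≤ y
          rw [← hysplit, hhead]; linarith
        · show y ≤ a + σ
          rw [← hysplit, hhead]; linarith
    · rintro ⟨p, hp, hy⟩
      simp only [hs, Finset.mem_image] at hp
      obtain ⟨F, hFsub, rfl⟩ := hp
      rw [Finset.mem_powerset] at hFsub
      set a : ℝ := ∑ n ∈ F, x n with ha
      obtain ⟨hy1, hy2⟩ := hy
      have hy1' : a ≤ y := hy1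
      have hy2' : y ≤ a + σ := hy2
      set t : ℝ := y - a with hst
      have ht0 : 0 ≤ t := by simp only [hst]; linarith
      have ht1 : t ≤ σ := by simp only [hst]; linarith
      have hcond' : ∀ k, x' k ≤ ∑' j, x' (k + 1 + j) := by
        intro k
        have := hN (N + k) (Nat.le_add_right N k)
        calc x' k = x (N + k) := rfl
          _ ≤ ∑' j, x (N + k + 1 + j) := this
          _ = ∑' j, x' (k + 1 + j) := tsum_congr fun j => by simp only [hx']; congr 1; omega
      obtain ⟨S, hS⟩ := kakeya_full x' (fun k => hpos _) hsum' hcond' t ht0 (by rw [← hσ]; exact ht1)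
      -- build T
      set g : ℕ → ℕ := fun k => N + k with hg
      have hginj : Function.Injective g := fun a b h => by simpa [hg] using h
      set T : Set ℕ := (↑F : Set ℕ) ∪ (g '' S) with hTdef
      have hdisj : Disjoint (↑F : Set ℕ) (g '' S) := by
        rw [Set.disjoint_left]
        rintro n hnF ⟨k, _, rfl⟩
        have h1 : g k < N := Finset.mem_range.mp (hFsub hnF)
        simp only [hg] at h1
        omega
      have hsplit : Set.indicator T x =
          Set.indicator (↑F : Set ℕ) x + Set.indicator (g '' S) x := by
        rw [hTdef, Set.indicator_union_of_disjoint hdisj]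
        rfl
      have hsumF : HasSum (Set.indicator (↑F : Set ℕ) x) a := by
        have h0 : ∀ b ∉ F, Set.indicator (↑F : Set ℕ) x b = 0 := fun b hb =>
          Set.indicator_of_notMem (by simpa using hb) x
        have := hasSum_sum_of_ne_finset_zero (L := SummationFilter.unconditional ℕ) h0
        rwa [Finset.sum_congr rfl (fun i hi => Set.indicator_of_mem (by simpa using hi) x)] at this
      have hsumS : HasSum (Set.indicator (g '' S) x) t := by
        have hzero : ∀ n, n ∉ Set.range g → Set.indicator (g '' S) x n = 0 := by
          intro n hn
          refine Set.indicator_of_notMem ?_ x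
          rintro ⟨k, _, rfl⟩
          exact hn ⟨k, rfl⟩
        rw [← Function.Injective.hasSum_iff hginj hzero]
        have heq : (Set.indicator (g '' S) x ∘ g) = Set.indicator S x' := by
          funext k
          by_cases hk : k ∈ S
          · rw [Function.comp_apply, Set.indicator_of_mem (Set.mem_image_of_mem g hk),
              Set.indicator_of_mem hk]
          · rw [Function.comp_apply, Set.indicator_of_notMem hk,
              Set.indicator_of_notMem ?_]
            rintro ⟨j, hj, hje⟩
            exact hk (hginj hje ▸ hj)
        rw [heq]
        exact hS
      have hadd := hsumF.add hsumS
      have hfin : HasSum (Set.indicator T x) (a + t) := by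
        rw [hsplit]; exact hadd
      have hyt : a + t = y := by simp [hst]
      exact ⟨T, hyt ▸ hfin⟩
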